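/- Let (λ_n)_{n≥1} be positive reals, let (ν_n)_{n≥1} satisfy 0 < ν_n ≤ 1 for all n, and for n ≥ 1 let r(n,t) = (−1)^{n−1} (λ_1/λ_n) ∑_{k=n−1}^∞ (−1)^k ∑_{(k_1,…,k_n) ∈ Λ^k_n} ( t^{∑_{j=1}^n k_j ν_j} ∏_{j=1}^n λ_j^{k_j} ) / Γ(1 + ∑_{j=1}^n k_j ν_j). Then for every s > 0 such that s^{ν_k} > λ_k for all 1 ≤ k ≤ n, the Laplace transform of r(n,·) satisfies ∫₀^∞ r(n,t) e^{−st} dt = s^{ν_1 − 1} ∏_{k=1}^{n−1} λ_k / ∏_{k=1}^n (s^{ν_k} + λ_k). -/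

import Mathlib

open scoped BigOperators

/-- Riemann–Liouville fractional integral of order `α`. -/
noncomputable def rlInt (α : ℝ) (f : ℝ → ℝ) (t : ℝ) : ℝ :=
  (1 / Real.Gamma α) * ∫ s in (0:ℝ)..t, (t - s) ^ (α - 1) * f s

/-- `Lambda n k` is the set of tuples `(k_1, …, k_n)` of nonnegative integers with
`k_1 + ⋯ + k_n = k` and `k_j ≥ 1` for `2 ≤ j ≤ n` (`k_1` may be `0`); the coordinate
`j : Fin n` represents the index `j + 1 ∈ {1, …, n}`. -/
def Lambda (n k : ℕ) : Finset (Fin n → ℕ) :=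
  (Finset.Nat.antidiagonalTuple n k).filter
    (fun κ => ∀ j : Fin n, 1 ≤ j.val → 1 ≤ κ j)

/-- The state probabilities of the state dependent fractional pure birth process
(note that `Lambda n k = ∅` for `k < n - 1`, so the series over all `k : ℕ` agrees
with the series starting at `k = n - 1`). -/
noncomputable def rBirth (lam : ℕ → ℝ) (ν : ℕ → ℝ) (n : ℕ) (t : ℝ) : ℝ :=
  (-1 : ℝ) ^ (n - 1) * (lam 1 / lam n) * ∑' k : ℕ, (-1 : ℝ) ^ k *
    ∑ κ ∈ Lambda n k,
      (t ^ (∑ j, (κ j : ℝ) * ν (j.val + 1)) * ∏ j, lam (j.val + 1) ^ (κ j)) /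
        Real.Gamma (1 + ∑ j, (κ j : ℝ) * ν (j.val + 1))


open Finset MeasureTheory

set_option maxHeartbeats 1000000

/-- rpow of a finite sum is the product of rpows. -/
lemma rpow_finset_sum {x : ℝ} (hx : 0 < x) {ι : Type*} (S : Finset ι) (f : ι → ℝ) :
    x ^ (∑ i ∈ S, f i) = ∏ i ∈ S, x ^ f i := by
  classical
  induction S using Finset.induction with
  | empty => simp
  | insert _ _ h ih => rw [Finset.sum_insert h, Finset.prod_insert h, Real.rpow_add hx, ih]

/-- tsum over a pi type of a product equals product of tsums. -/
lemma pi_tsum_prod : ∀ (n : ℕ) (g : Fin n → ℕ → ℝ),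
    (∀ j, Summable fun m => |g j m|) →
    Summable (fun κ : Fin n → ℕ => |∏ j, g j (κ j)|) ∧
      ∑' κ : Fin n → ℕ, ∏ j, g j (κ j) = ∏ j, ∑' m, g j m := by
  intro n
  induction n with
  | zero =>
    intro g _
    constructor
    · exact .of_finite
    · have : ∀ κ : Fin 0 → ℕ, (∏ j, g j (κ j)) = 1 := by
        intro κ; simp
      rw [tsum_congr this,
        tsum_eq_single (default : Fin 0 → ℕ) (fun b hb => absurd (Subsingleton.elim b _) hb)]
      simp
  | succ n ih =>
    intro g hg
    obtain ⟨ihs, iht⟩ := ih (fun j => g j.succ) (fun j => hg j.succ)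
    have hf1 : Summable (fun m => ‖g 0 m‖) := by simpa only [Real.norm_eq_abs] using hg 0
    have hf2 : Summable (fun κ : Fin n → ℕ => ‖∏ j, g j.succ (κ j)‖) := by
      simpa only [Real.norm_eq_abs] using ihs
    have hs : Summable (fun p : ℕ × (Fin n → ℕ) => g 0 p.1 * ∏ j, g j.succ (p.2 j)) := by
      have := summable_mul_of_summable_norm (R := ℝ) (ι := ℕ) (ι' := Fin n → ℕ) hf1 hf2
      exact this
    have ht : ∑' p : ℕ × (Fin n → ℕ), g 0 p.1 * ∏ j, g j.succ (p.2 j)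
        = (∑' m, g 0 m) * ∑' κ : Fin n → ℕ, ∏ j, g j.succ (κ j) := by
      have := tsum_mul_tsum_of_summable_norm (R := ℝ) (ι := ℕ) (ι' := Fin n → ℕ) hf1 hf2
      exact this.symm
    set e : ℕ × (Fin n → ℕ) ≃ (Fin (n+1) → ℕ) := (Fin.consEquiv fun _ => ℕ).trans (Equiv.refl _)
    have hcomp : ∀ p : ℕ × (Fin n → ℕ),
        (∏ j, g j (e p j)) = g 0 p.1 * ∏ j : Fin n, g j.succ (p.2 j) := by
      intro p
      rw [Fin.prod_univ_succ]
      simp [e, Fin.consEquiv]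
    constructor
    · rw [← e.summable_iff]
      have : ((fun κ : Fin (n+1) → ℕ => |∏ j, g j (κ j)|) ∘ e)
          = fun p : ℕ × (Fin n → ℕ) => |g 0 p.1 * ∏ j : Fin n, g j.succ (p.2 j)| := by
        funext p; simp only [Function.comp_apply, hcomp p]
      rw [this]
      exact hs.abs
    · rw [← e.tsum_eq, tsum_congr hcomp, ht, iht, Fin.prod_univ_succ]

/-- Grouping a sum over tuples by total weight. -/
lemma hasSum_antidiagonalTuple {n : ℕ} (f : (Fin n → ℕ) → ℝ) (hf : Summable f) :
    HasSum (fun k => ∑ κ ∈ Finset.Nat.antidiagonalTuple n k, f κ) (∑' κ, f κ) := by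
  classical
  set e : (Σ k : ℕ, (Finset.Nat.antidiagonalTuple n k : Finset (Fin n → ℕ))) ≃ (Fin n → ℕ) :=
    { toFun := fun σ => σ.2.1
      invFun := fun κ => ⟨∑ j, κ j, ⟨κ, Finset.Nat.mem_antidiagonalTuple.2 rfl⟩⟩
      left_inv := by
        rintro ⟨k, κ, hκ⟩
        obtain rfl : ∑ j, κ j = k := Finset.Nat.mem_antidiagonalTuple.1 hκ
        rfl
      right_inv := fun κ => rfl }
  have h1 : HasSum (f ∘ e) (∑' κ, f κ) := e.hasSum_iff.2 hf.hasSum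
  refine h1.sigma fun k => ?_
  have := hasSum_fintype (fun c : (Finset.Nat.antidiagonalTuple n k : Finset (Fin n → ℕ)) => f c.1)
  rwa [Finset.sum_coe_sort] at this

lemma summable_abs_gy {y : ℝ} (hy : |y| < 1) (P : ℕ → Prop) [DecidablePred P] :
    Summable fun m => |if P m then y ^ m else 0| := by
  apply Summable.of_nonneg_of_le (fun m => abs_nonneg _) (fun m => ?_)
    (summable_geometric_of_lt_one (abs_nonneg y) hy)
  by_cases h : P m
  · rw [if_pos h, abs_pow]
  · rw [if_neg h, abs_zero]
    positivity

lemma tsum_gy_pos {y : ℝ} (hy : |y| < 1) :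
    ∑' m : ℕ, (if 1 ≤ m then y ^ m else 0) = y * (1 - y)⁻¹ := by
  have hsum : Summable fun m : ℕ => if 1 ≤ m then y ^ m else 0 :=
    (summable_abs_gy hy _).of_abs
  have h1 : ∀ b : ℕ, (if 1 ≤ b + 1 then y ^ (b + 1) else 0) = y * y ^ b := by
    intro b; rw [if_pos (Nat.succ_le_succ (Nat.zero_le b)), pow_succ]; ring
  rw [Summable.tsum_eq_zero_add hsum, if_neg (by norm_num), zero_add, tsum_congr h1, tsum_mul_left,
    tsum_geometric_of_norm_lt_one (by rwa [Real.norm_eq_abs])]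

lemma integrable_rpow_exp {a r : ℝ} (ha : 0 ≤ a) (hr : 0 < r) :
    MeasureTheory.IntegrableOn (fun t : ℝ => t ^ a * Real.exp (-(r * t))) (Set.Ioi 0) := by
  have h := integrableOn_rpow_mul_exp_neg_mul_rpow (p := 1) (s := a) (b := r)
    (by linarith) one_pos hr
  refine h.congr_fun (fun t ht => ?_) measurableSet_Ioi
  simp only [Real.rpow_one, neg_mul]

lemma integral_rpow_exp {a r : ℝ} (ha : 0 ≤ a) (hr : 0 < r) :
    ∫ t in Set.Ioi (0:ℝ), t ^ a * Real.exp (-(r * t))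
      = (1 / r) ^ (a + 1) * Real.Gamma (a + 1) := by
  have h := Real.integral_rpow_mul_exp_neg_mul_Ioi (a := a + 1) (r := r) (by linarith) hr
  simpa using h

/-- Laplace transform of the state probabilities of SDFPBP. -/
theorem sdfpbp_laplace_transform (lam : ℕ → ℝ) (hlam : ∀ m, 1 ≤ m → 0 < lam m)
    (ν : ℕ → ℝ) (hν : ∀ m, 1 ≤ m → 0 < ν m ∧ ν m ≤ 1)
    (n : ℕ) (hn : 1 ≤ n) (s : ℝ) (hs : 0 < s)
    (hsk : ∀ k, 1 ≤ k → k ≤ n → lam k < s ^ ν k) :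
    ∫ t in Set.Ioi (0:ℝ), rBirth lam ν n t * Real.exp (-(s * t))
      = s ^ (ν 1 - 1) * (∏ k ∈ Finset.Icc 1 (n - 1), lam k)
          / ∏ k ∈ Finset.Icc 1 n, (s ^ ν k + lam k) := by
  classical
  obtain ⟨m, rfl⟩ : ∃ m, n = m + 1 := ⟨n - 1, (Nat.succ_pred_eq_of_pos hn).symm⟩
  -- basic positivity facts
  have hlamj : ∀ j : Fin (m+1), 0 < lam (j.val + 1) :=
    fun j => hlam _ (Nat.succ_le_succ (Nat.zero_le _))
  have hνj : ∀ j : Fin (m+1), 0 < ν (j.val + 1) :=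
    fun j => (hν _ (Nat.succ_le_succ (Nat.zero_le _))).1
  have hsν : ∀ j : Fin (m+1), 0 < s ^ ν (j.val + 1) :=
    fun j => Real.rpow_pos_of_pos hs _
  -- the geometric data
  set y : Fin (m+1) → ℝ := fun j => -(lam (j.val + 1) * (1/s) ^ ν (j.val + 1)) with hy_def
  have hxval : ∀ j : Fin (m+1),
      lam (j.val + 1) * (1/s) ^ ν (j.val + 1) = lam (j.val + 1) / s ^ ν (j.val + 1) := by
    intro j
    rw [one_div, Real.inv_rpow hs.le, div_eq_mul_inv]
  have hyabs : ∀ j : Fin (m+1), |y j| = lam (j.val + 1) * (1/s) ^ ν (j.val + 1) := by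
    intro j
    rw [hy_def, abs_neg, abs_of_pos]
    exact mul_pos (hlamj j) (Real.rpow_pos_of_pos (by positivity) _)
  have hy1 : ∀ j : Fin (m+1), |y j| < 1 := by
    intro j
    rw [hyabs j, hxval j, div_lt_one (hsν j)]
    exact hsk (j.val + 1) (Nat.succ_le_succ (Nat.zero_le _)) (Nat.succ_le_succ (Nat.le_of_lt_succ j.isLt))
  set gy : Fin (m+1) → ℕ → ℝ :=
    fun j mm => if 1 ≤ j.val → 1 ≤ mm then y j ^ mm else 0 with hgy_def
  set gx : Fin (m+1) → ℕ → ℝ :=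
    fun j mm => if 1 ≤ j.val → 1 ≤ mm then |y j| ^ mm else 0 with hgx_def
  have hgys : ∀ j, Summable fun mm => |gy j mm| := fun j => summable_abs_gy (hy1 j) _
  have hgxs : ∀ j, Summable fun mm => |gx j mm| := by
    intro j
    have := summable_abs_gy (y := |y j|) (by rw [abs_abs]; exact hy1 j) (fun mm => 1 ≤ j.val → 1 ≤ mm)
    exact this
  obtain ⟨hfyA, hfyT⟩ := pi_tsum_prod (m+1) gy hgys
  obtain ⟨hfxA, hfxT⟩ := pi_tsum_prod (m+1) gx hgxs
  have hHSy := hasSum_antidiagonalTuple (fun κ => ∏ j, gy j (κ j)) hfyA.of_abs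
  have hHSx := hasSum_antidiagonalTuple (fun κ => ∏ j, gx j (κ j)) hfxA.of_abs
  -- per-tuple quantities
  have hA0 : ∀ κ : Fin (m+1) → ℕ, 0 ≤ ∑ j, (κ j : ℝ) * ν (j.val + 1) :=
    fun κ => Finset.sum_nonneg fun j _ => mul_nonneg (Nat.cast_nonneg _) (hνj j).le
  have hΓ : ∀ κ : Fin (m+1) → ℕ, 0 < Real.Gamma (1 + ∑ j, (κ j : ℝ) * ν (j.val + 1)) :=
    fun κ => Real.Gamma_pos_of_pos (by linarith [hA0 κ])
  have hP : ∀ κ : Fin (m+1) → ℕ, 0 < ∏ j, lam (j.val + 1) ^ (κ j) :=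
    fun κ => Finset.prod_pos fun j _ => pow_pos (hlamj j) _
  -- the single-term integrand, rewritten
  have hfun : ∀ κ : Fin (m+1) → ℕ,
      (fun t : ℝ => (t ^ (∑ j, (κ j : ℝ) * ν (j.val + 1)) * ∏ j, lam (j.val + 1) ^ (κ j)) /
          Real.Gamma (1 + ∑ j, (κ j : ℝ) * ν (j.val + 1)) * Real.exp (-(s * t)))
        = fun t : ℝ => ((∏ j, lam (j.val + 1) ^ (κ j)) /
            Real.Gamma (1 + ∑ j, (κ j : ℝ) * ν (j.val + 1))) *
          (t ^ (∑ j, (κ j : ℝ) * ν (j.val + 1)) * Real.exp (-(s * t))) := by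
    intro κ; funext t; ring
  have hmint : ∀ κ : Fin (m+1) → ℕ,
      MeasureTheory.IntegrableOn (fun t : ℝ =>
        (t ^ (∑ j, (κ j : ℝ) * ν (j.val + 1)) * ∏ j, lam (j.val + 1) ^ (κ j)) /
          Real.Gamma (1 + ∑ j, (κ j : ℝ) * ν (j.val + 1)) * Real.exp (-(s * t)))
        (Set.Ioi 0) := by
    intro κ
    rw [hfun κ]
    exact (integrable_rpow_exp (hA0 κ) hs).const_mul _
  have hint : ∀ κ : Fin (m+1) → ℕ,
      ∫ t in Set.Ioi (0:ℝ),
        (t ^ (∑ j, (κ j : ℝ) * ν (j.val + 1)) * ∏ j, lam (j.val + 1) ^ (κ j)) /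
          Real.Gamma (1 + ∑ j, (κ j : ℝ) * ν (j.val + 1)) * Real.exp (-(s * t))
      = (∏ j, lam (j.val + 1) ^ (κ j)) * (1/s) ^ ((∑ j, (κ j : ℝ) * ν (j.val + 1)) + 1) := by
    intro κ
    rw [hfun κ, MeasureTheory.integral_const_mul, integral_rpow_exp (hA0 κ) hs]
    rw [show (∑ j, (κ j : ℝ) * ν (j.val + 1)) + 1 = 1 + ∑ j, (κ j : ℝ) * ν (j.val + 1) from
      add_comm _ _]
    rw [div_mul_eq_mul_div, mul_div_assoc, mul_div_cancel_right₀ _ (hΓ κ).ne']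
  -- algebraic identity for a single tuple
  have hprodx : ∀ κ : Fin (m+1) → ℕ,
      (∏ j, lam (j.val + 1) ^ (κ j)) * (1/s) ^ ((∑ j, (κ j : ℝ) * ν (j.val + 1)) + 1)
        = (1/s) * ∏ j, |y j| ^ (κ j) := by
    intro κ
    have h1s : (0:ℝ) < 1/s := by positivity
    rw [Real.rpow_add h1s, Real.rpow_one, rpow_finset_sum h1s]
    have hterm : ∀ j : Fin (m+1),
        (1/s : ℝ) ^ ((κ j : ℝ) * ν (j.val + 1)) = ((1/s) ^ ν (j.val + 1)) ^ (κ j) := by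
      intro j
      rw [mul_comm, Real.rpow_mul h1s.le, Real.rpow_natCast]
    rw [Finset.prod_congr rfl fun j _ => hterm j, ← mul_assoc, ← Finset.prod_mul_distrib]
    rw [Finset.prod_congr rfl fun j (_ : j ∈ Finset.univ) => (hyabs j ▸ mul_pow _ _ _).symm]
    ring
  have hprody : ∀ k : ℕ, ∀ κ ∈ Finset.Nat.antidiagonalTuple (m+1) k,
      (-1:ℝ)^k * ((∏ j, lam (j.val + 1) ^ (κ j)) *
          (1/s) ^ ((∑ j, (κ j : ℝ) * ν (j.val + 1)) + 1))
        = (1/s) * ∏ j, (y j) ^ (κ j) := by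
    intro k κ hκ
    have hk : ∑ j, κ j = k := Finset.Nat.mem_antidiagonalTuple.1 hκ
    rw [hprodx κ, ← hk, ← Finset.prod_pow_eq_pow_sum, mul_left_comm, ← Finset.prod_mul_distrib]
    congr 1
    refine Finset.prod_congr rfl fun j _ => ?_
    rw [← mul_pow, ← neg_eq_neg_one_mul, hyabs j, hy_def]
  -- from `Lambda` sums to `antidiagonalTuple` sums
  have hsub : ∀ (k : ℕ) (κ : Fin (m+1) → ℕ), κ ∈ Lambda (m+1) k →
      κ ∈ Finset.Nat.antidiagonalTuple (m+1) k := by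
    intro k κ h
    simp only [Lambda, Finset.mem_filter] at h
    exact h.1
  have hLam : ∀ (z : Fin (m+1) → ℝ) (k : ℕ),
      ∑ κ ∈ Lambda (m+1) k, ∏ j, (z j) ^ (κ j)
        = ∑ κ ∈ Finset.Nat.antidiagonalTuple (m+1) k,
            ∏ j, (if 1 ≤ j.val → 1 ≤ κ j then z j ^ (κ j) else 0) := by
    intro z k
    rw [Lambda, Finset.sum_filter]
    refine Finset.sum_congr rfl fun κ _ => ?_
    by_cases hc : ∀ j : Fin (m+1), 1 ≤ j.val → 1 ≤ κ j
    · rw [if_pos hc]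
      exact Finset.prod_congr rfl fun j _ => (if_pos (hc j)).symm
    · rw [if_neg hc]
      push_neg at hc
      obtain ⟨j, hj1, hj0⟩ := hc
      refine (Finset.prod_eq_zero (Finset.mem_univ j) ?_).symm
      rw [if_neg]
      intro himp
      exact absurd (himp hj1) (by omega)
  -- the summands of the series, as functions of `t`
  set F : ℕ → ℝ → ℝ := fun k t => ((-1:ℝ)^k *
      ∑ κ ∈ Lambda (m+1) k,
        (t ^ (∑ j, (κ j : ℝ) * ν (j.val + 1)) * ∏ j, lam (j.val + 1) ^ (κ j)) /
          Real.Gamma (1 + ∑ j, (κ j : ℝ) * ν (j.val + 1))) * Real.exp (-(s * t)) with hF_def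
  have hFk : ∀ k : ℕ, F k = fun t => ∑ κ ∈ Lambda (m+1) k,
      (-1:ℝ)^k * ((t ^ (∑ j, (κ j : ℝ) * ν (j.val + 1)) * ∏ j, lam (j.val + 1) ^ (κ j)) /
          Real.Gamma (1 + ∑ j, (κ j : ℝ) * ν (j.val + 1)) * Real.exp (-(s * t))) := by
    intro k; funext t
    simp only [hF_def]
    rw [mul_assoc, Finset.sum_mul, Finset.mul_sum]
  have hFint : ∀ k : ℕ, MeasureTheory.Integrable (F k) (volume.restrict (Set.Ioi 0)) := by
    intro k
    rw [hFk k]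
    exact MeasureTheory.integrable_finset_sum _ fun κ _ => ((hmint κ).const_mul _)
  have hFeval : ∀ k : ℕ, ∫ t in Set.Ioi (0:ℝ), F k t
      = (1/s) * ∑ κ ∈ Finset.Nat.antidiagonalTuple (m+1) k, ∏ j, gy j (κ j) := by
    intro k
    rw [hFk k]
    rw [MeasureTheory.integral_finset_sum _ fun κ _ => ((hmint κ).const_mul _)]
    have hstep : ∀ κ ∈ Lambda (m+1) k,
        (∫ t in Set.Ioi (0:ℝ), (-1:ℝ)^k *
          ((t ^ (∑ j, (κ j : ℝ) * ν (j.val + 1)) * ∏ j, lam (j.val + 1) ^ (κ j)) /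
            Real.Gamma (1 + ∑ j, (κ j : ℝ) * ν (j.val + 1)) * Real.exp (-(s * t))))
          = (1/s) * ∏ j, (y j) ^ (κ j) := by
      intro κ hκ
      rw [MeasureTheory.integral_const_mul, hint κ]
      exact hprody k κ (hsub k κ hκ)
    rw [Finset.sum_congr rfl hstep, ← Finset.mul_sum, hLam y k]
  have hFnorm : ∀ k : ℕ, ∫ t in Set.Ioi (0:ℝ), ‖F k t‖
      = (1/s) * ∑ κ ∈ Finset.Nat.antidiagonalTuple (m+1) k, ∏ j, gx j (κ j) := by
    intro k
    have heq : Set.EqOn (fun t => ‖F k t‖)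
        (fun t => ∑ κ ∈ Lambda (m+1) k,
          (t ^ (∑ j, (κ j : ℝ) * ν (j.val + 1)) * ∏ j, lam (j.val + 1) ^ (κ j)) /
            Real.Gamma (1 + ∑ j, (κ j : ℝ) * ν (j.val + 1)) * Real.exp (-(s * t)))
        (Set.Ioi 0) := by
      intro t ht
      have ht0 : (0:ℝ) < t := Set.mem_Ioi.1 ht
      have hnn : ∀ κ ∈ Lambda (m+1) k,
          (0:ℝ) ≤ (t ^ (∑ j, (κ j : ℝ) * ν (j.val + 1)) * ∏ j, lam (j.val + 1) ^ (κ j)) /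
            Real.Gamma (1 + ∑ j, (κ j : ℝ) * ν (j.val + 1)) :=
        fun κ _ => div_nonneg (mul_nonneg (Real.rpow_nonneg ht0.le _) (hP κ).le) (hΓ κ).le
      show ‖F k t‖ = _
      simp only [hF_def]
      rw [Real.norm_eq_abs, abs_mul, abs_mul, abs_pow, abs_neg, abs_one, one_pow, one_mul,
        abs_of_nonneg (Real.exp_nonneg _), abs_of_nonneg (Finset.sum_nonneg hnn),
        Finset.sum_mul]
    rw [MeasureTheory.setIntegral_congr_fun measurableSet_Ioi heq,
      MeasureTheory.integral_finset_sum _ fun κ _ => hmint κ,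
      Finset.sum_congr rfl (fun κ hκ => (hint κ).trans (hprodx κ)), ← Finset.mul_sum,
      hLam (fun j => |y j|) k]
  have hFsum : Summable fun k => ∫ t in Set.Ioi (0:ℝ), ‖F k t‖ := by
    rw [funext hFnorm]
    exact hHSx.summable.mul_left _
  have hpt : ∀ t : ℝ, rBirth lam ν (m+1) t * Real.exp (-(s * t))
      = ((-1:ℝ)^m * (lam 1 / lam (m+1))) * ∑' k, F k t := by
    intro t
    simp only [rBirth, Nat.add_sub_cancel]
    rw [mul_assoc, ← tsum_mul_right]
  calc ∫ t in Set.Ioi (0:ℝ), rBirth lam ν (m+1) t * Real.exp (-(s * t))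
      = ∫ t in Set.Ioi (0:ℝ), ((-1:ℝ)^m * (lam 1 / lam (m+1))) * ∑' k, F k t := by
        simp only [hpt]
    _ = ((-1:ℝ)^m * (lam 1 / lam (m+1))) * ∫ t in Set.Ioi (0:ℝ), ∑' k, F k t :=
        MeasureTheory.integral_const_mul _ _
    _ = ((-1:ℝ)^m * (lam 1 / lam (m+1))) * ∑' k, ∫ t in Set.Ioi (0:ℝ), F k t := by
        rw [← MeasureTheory.integral_tsum_of_summable_integral_norm hFint hFsum]
    _ = ((-1:ℝ)^m * (lam 1 / lam (m+1))) *
          ∑' k, ((1/s) * ∑ κ ∈ Finset.Nat.antidiagonalTuple (m+1) k, ∏ j, gy j (κ j)) := by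
        rw [tsum_congr hFeval]
    _ = ((-1:ℝ)^m * (lam 1 / lam (m+1))) *
          ((1/s) * ∑' k, ∑ κ ∈ Finset.Nat.antidiagonalTuple (m+1) k, ∏ j, gy j (κ j)) := by
        rw [tsum_mul_left]
    _ = ((-1:ℝ)^m * (lam 1 / lam (m+1))) *
          ((1/s) * ∑' κ : Fin (m+1) → ℕ, ∏ j, gy j (κ j)) := by
        rw [hHSy.tsum_eq]
    _ = ((-1:ℝ)^m * (lam 1 / lam (m+1))) * ((1/s) * ∏ j, ∑' mm, gy j mm) := by
        rw [hfyT]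
    _ = s ^ (ν 1 - 1) * (∏ k ∈ Finset.Icc 1 (m + 1 - 1), lam k)
          / ∏ k ∈ Finset.Icc 1 (m + 1), (s ^ ν k + lam k) := by
        -- evaluate the geometric sums
        have hyformula : ∀ j : Fin (m+1), y j = -(lam (j.val + 1) / s ^ ν (j.val + 1)) := by
          intro j; simp only [hy_def]; rw [hxval j]
        have hD : ∀ j : Fin (m+1), 0 < s ^ ν (j.val + 1) + lam (j.val + 1) :=
          fun j => add_pos (hsν j) (hlamj j)
        have hTinv : ∀ j : Fin (m+1),
            (1 - y j)⁻¹ = s ^ ν (j.val + 1) / (s ^ ν (j.val + 1) + lam (j.val + 1)) := by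
          intro j
          have h1 : 1 - y j = (s ^ ν (j.val + 1) + lam (j.val + 1)) / s ^ ν (j.val + 1) := by
            rw [hyformula j, sub_neg_eq_add]
            field_simp
          rw [h1, inv_div]
        have hT : ∀ j : Fin (m+1), (∑' mm, gy j mm)
            = if j.val = 0 then (1 - y j)⁻¹ else y j * (1 - y j)⁻¹ := by
          intro j
          by_cases hj : j.val = 0
          · rw [if_pos hj]
            have hg : gy j = fun mm => y j ^ mm := by
              funext mm
              exact if_pos (fun h => absurd h (by omega))
            rw [hg]
            exact tsum_geometric_of_norm_lt_one (by rw [Real.norm_eq_abs]; exact hy1 j)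
          · rw [if_neg hj]
            have hg : gy j = fun mm => if 1 ≤ mm then y j ^ mm else 0 := by
              funext mm
              simp only [hgy_def]
              exact if_congr ⟨fun h => h (by omega), fun h _ => h⟩ rfl rfl
            rw [hg]
            exact tsum_gy_pos (hy1 j)
        have hprodT : ∏ j : Fin (m+1), (∑' mm, gy j mm)
            = (s ^ ν 1 / (s ^ ν 1 + lam 1)) *
              ((-1:ℝ)^m * ((∏ i ∈ Finset.range m, lam (i+1+1)) /
                ∏ i ∈ Finset.range m, (s ^ ν (i+1+1) + lam (i+1+1)))) := by
          rw [Finset.prod_congr rfl fun j (_ : j ∈ Finset.univ) => hT j, Fin.prod_univ_succ]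
          congr 1
          · rw [if_pos (by simp : ((0 : Fin (m+1))).val = 0), hTinv 0]
            norm_num
          · have hjs : ∀ j : Fin m,
                (if (j.succ : Fin (m+1)).val = 0 then (1 - y j.succ)⁻¹
                  else y j.succ * (1 - y j.succ)⁻¹)
                = -(lam (j.val+1+1) / (s ^ ν (j.val+1+1) + lam (j.val+1+1))) := by
              intro j
              rw [if_neg (by simp [Fin.val_succ])]
              have h1 := hyformula j.succ
              have h2 := hTinv j.succ
              have hb := (hsν j.succ).ne'
              have hc := (hD j.succ).ne'
              simp only [Fin.val_succ] at h1 h2 hb hc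
              rw [h2, h1]
              field_simp
            rw [Finset.prod_congr rfl fun j (_ : j ∈ Finset.univ) => hjs j,
              Fin.prod_univ_eq_prod_range
                (fun i => -(lam (i+1+1) / (s ^ ν (i+1+1) + lam (i+1+1)))) m]
            have hneg : ∀ i ∈ Finset.range m,
                -(lam (i+1+1) / (s ^ ν (i+1+1) + lam (i+1+1)))
                = (-1:ℝ) * (lam (i+1+1) / (s ^ ν (i+1+1) + lam (i+1+1))) := by
              intro i _; ring
            rw [Finset.prod_congr rfl hneg, Finset.prod_mul_distrib, Finset.prod_const,
              Finset.card_range, Finset.prod_div_distrib]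
        rw [hprodT]
        have hIcc : ∀ (N : ℕ) (f : ℕ → ℝ),
            ∏ k ∈ Finset.Icc 1 N, f k = ∏ i ∈ Finset.range N, f (i+1) := by
          intro N f
          rw [← Finset.Ico_add_one_right_eq_Icc, Finset.prod_Ico_eq_prod_range]
          exact Finset.prod_congr (by simp) fun i _ => by rw [Nat.add_comm]
        have hden : ∏ k ∈ Finset.Icc 1 (m+1), (s ^ ν k + lam k)
            = (∏ i ∈ Finset.range m, (s ^ ν (i+1+1) + lam (i+1+1))) * (s ^ ν 1 + lam 1) := by
          rw [hIcc, Finset.prod_range_succ']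
        have hnum : ∏ k ∈ Finset.Icc 1 (m + 1 - 1), lam k
            = ∏ i ∈ Finset.range m, lam (i+1) := by
          rw [Nat.add_sub_cancel, hIcc]
        have hlamswap : lam 1 * ∏ i ∈ Finset.range m, lam (i+1+1)
            = lam (m+1) * ∏ i ∈ Finset.range m, lam (i+1) := by
          have h1 := Finset.prod_range_succ' (fun i => lam (i+1)) m
          have h2 := Finset.prod_range_succ (fun i => lam (i+1)) m
          rw [h1] at h2
          rw [mul_comm (lam 1), mul_comm (lam (m+1))]
          simpa using h2
        have hsν1 : (0:ℝ) < s ^ ν 1 := Real.rpow_pos_of_pos hs _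
        have hD1 : (0:ℝ) < s ^ ν 1 + lam 1 := by
          have := hD 0
          simpa using this
        have hQ : (0:ℝ) < ∏ i ∈ Finset.range m, (s ^ ν (i+1+1) + lam (i+1+1)) := by
          refine Finset.prod_pos fun i _ => ?_
          exact add_pos (Real.rpow_pos_of_pos hs _) (hlam _ (by omega))
        have hlm : (0:ℝ) < lam (m+1) := hlam _ (by omega)
        have hm1 : ((-1:ℝ)^m * (-1:ℝ)^m) = 1 := by
          rw [← mul_pow]; norm_num
        rw [hden, hnum, Real.rpow_sub hs, Real.rpow_one]
        field_simp
        linear_combination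
          (lam 1 * ∏ i ∈ Finset.range m, lam (i+1+1)) * hm1 + hlamswap
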